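/- Let k be a commutative ring of characteristic zero. Fix positive integers a_0 < a_1 < ⋯ < a_n, block sizes c_0, …, c_n ≥ 1, and let R := k[x_{ij} : 0 ≤ i ≤ n, 1 ≤ j ≤ c_i] be the polynomial ring graded by wt(x_{ij}) = a_i. Let d ≥ 0 and let V_d be a k-submodule of the weighted-homogeneous degree-d part of R satisfying the nondegeneracy hypothesis: for every quotient ring k' of k, every b > 0, and every k'-derivation ∂' of weight −b of the subring k'[x_{ij} : i ≥ 1] in the variables of weight > a_0, if ∂' vanishes on the image V'_d of V_d (reduce coefficients along k → k' and set all weight-a_0 variables x_{0j} to 0), then ∂' = 0. Then for every b > 0, every k-derivation ∂ of R of weight −b satisfying ∂(V_d) = 0 and ∂(x_{0j}) = 0 for all 1 ≤ j ≤ c_0 is the zero derivation. (Paper's Claim II.e: the kernel of the projection pr on L_{−b}(V_d) consists only of the null derivation.) -/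

import Mathlib

set_option linter.unusedSectionVars false
set_option maxHeartbeats 1000000


/-- The index set of the variables `x_{ij}`, `0 ≤ i ≤ n`, `1 ≤ j ≤ c i`:
blocks `i = 0,…,n` of sizes `c i`. -/
abbrev BlockIdx (n : ℕ) (c : Fin (n + 1) → ℕ) : Type := (i : Fin (n + 1)) × Fin (c i)

/-- The weight of the variable `x_{ij}` is `a i`. -/
def blockWt {n : ℕ} {c : Fin (n + 1) → ℕ} (a : Fin (n + 1) → ℕ) (s : BlockIdx n c) : ℤ :=
  a s.1

/-- A derivation of a graded polynomial ring (weights `w`) has weight `-b` if each `∂ x_s` is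
weighted homogeneous of degree `w s - b` (hence zero when `w s - b < 0`, since all weights are
nonnegative). -/
def DerivationHasWt {k : Type*} [CommRing k] {τ : Type*} (w : τ → ℤ) (b : ℤ)
    (der : Derivation k (MvPolynomial τ k) (MvPolynomial τ k)) : Prop :=
  ∀ s : τ, MvPolynomial.IsWeightedHomogeneous w (der (MvPolynomial.X s)) (w s - b)

/-- The ring map `k[x_{ij}] → k'[x_{ij} : i ≥ 1]`, reducing coefficients along the quotient
`k → k' = k ⧸ J` and setting the weight-`a 0` variables `x_{0j}` to `0`. -/
noncomputable def restrictBlocks {k : Type*} [CommRing k] (n : ℕ) (c : Fin (n + 1) → ℕ)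
    (J : Ideal k) :
    MvPolynomial (BlockIdx n c) k →+*
      MvPolynomial {s : BlockIdx n c // s.1 ≠ 0} (k ⧸ J) :=
  (MvPolynomial.aeval fun s : BlockIdx n c =>
      if h : s.1 = 0 then 0 else MvPolynomial.X (⟨s, h⟩ : {s : BlockIdx n c // s.1 ≠ 0})
    ).toRingHom.comp (MvPolynomial.map (Ideal.Quotient.mk J))




namespace ClaimIIe

open MvPolynomial

variable {k : Type*} [CommRing k] {σ : Type*} (p : σ → Prop) [DecidablePred p]

/-- Splitting isomorphism for a polynomial ring along a predicate on variables. -/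
noncomputable def Phi (k : Type*) [CommRing k] :
    MvPolynomial σ k ≃ₐ[k] MvPolynomial {s // p s} (MvPolynomial {s // ¬ p s} k) :=
  (renameEquiv k (Equiv.sumCompl p).symm).trans (sumAlgEquiv k _ _)

@[simp] theorem Phi_C (r : k) : Phi p k (C r) = C (C r) := by
  simp [Phi, sumToIter_C]

theorem Phi_X_pos {s : σ} (h : p s) :
    Phi p k (X s) = X (⟨s, h⟩ : {s // p s}) := by
  simp [Phi, Equiv.sumCompl_symm_apply_of_pos h, sumToIter_Xl]

theorem Phi_X_neg {s : σ} (h : ¬ p s) :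
    Phi p k (X s) = C (X (⟨s, h⟩ : {s // ¬ p s})) := by
  simp [Phi, Equiv.sumCompl_symm_apply_of_neg h, sumToIter_Xr]

/-- Restriction of an exponent to the variables satisfying `p`. -/
noncomputable def split0 (u : σ →₀ ℕ) : {s // p s} →₀ ℕ := u.subtypeDomain p

/-- Restriction of an exponent to the variables not satisfying `p`. -/
noncomputable def split1 (u : σ →₀ ℕ) : {s // ¬ p s} →₀ ℕ := u.subtypeDomain fun s => ¬ p s

/-- Combine exponents on the two classes of variables. -/
noncomputable def merge (α : {s // p s} →₀ ℕ) (d : {s // ¬ p s} →₀ ℕ) : σ →₀ ℕ :=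
  Finsupp.embDomain (Function.Embedding.subtype p) α +
    Finsupp.embDomain (Function.Embedding.subtype fun s => ¬ p s) d

theorem merge_apply_pos (α : {s // p s} →₀ ℕ) (d : {s // ¬ p s} →₀ ℕ) {s : σ} (h : p s) :
    merge p α d s = α ⟨s, h⟩ := by
  have h1 : Finsupp.embDomain (Function.Embedding.subtype p) α s = α ⟨s, h⟩ := by
    have := Finsupp.embDomain_apply_self (Function.Embedding.subtype p) α ⟨s, h⟩
    simpa using this
  have h2 : Finsupp.embDomain (Function.Embedding.subtype fun s => ¬ p s) d s = 0 := by
    apply Finsupp.embDomain_notin_range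
    rintro ⟨⟨t, ht⟩, rfl⟩
    exact ht h
  simp [merge, h1, h2]

theorem merge_apply_neg (α : {s // p s} →₀ ℕ) (d : {s // ¬ p s} →₀ ℕ) {s : σ} (h : ¬ p s) :
    merge p α d s = d ⟨s, h⟩ := by
  have h1 : Finsupp.embDomain (Function.Embedding.subtype fun s => ¬ p s) d s = d ⟨s, h⟩ := by
    have := Finsupp.embDomain_apply_self (Function.Embedding.subtype fun s => ¬ p s) d ⟨s, h⟩
    simpa using this
  have h2 : Finsupp.embDomain (Function.Embedding.subtype p) α s = 0 := by
    apply Finsupp.embDomain_notin_range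
    rintro ⟨⟨t, ht⟩, rfl⟩
    exact h ht
  simp [merge, h1, h2]

@[simp] theorem split0_merge (α : {s // p s} →₀ ℕ) (d : {s // ¬ p s} →₀ ℕ) :
    split0 p (merge p α d) = α := by
  ext ⟨s, h⟩
  simp [split0, Finsupp.subtypeDomain_apply, merge_apply_pos p α d h]

@[simp] theorem split1_merge (α : {s // p s} →₀ ℕ) (d : {s // ¬ p s} →₀ ℕ) :
    split1 p (merge p α d) = d := by
  ext ⟨s, h⟩
  simp [split1, Finsupp.subtypeDomain_apply, merge_apply_neg p α d h]

theorem merge_split (u : σ →₀ ℕ) : merge p (split0 p u) (split1 p u) = u := by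
  ext s
  by_cases h : p s
  · rw [merge_apply_pos p _ _ h]; simp [split0]
  · rw [merge_apply_neg p _ _ h]; simp [split1]

theorem eq_merge_iff (u : σ →₀ ℕ) (α : {s // p s} →₀ ℕ) (d : {s // ¬ p s} →₀ ℕ) :
    u = merge p α d ↔ split0 p u = α ∧ split1 p u = d := by
  constructor
  · rintro rfl; simp
  · rintro ⟨rfl, rfl⟩; rw [merge_split]

@[simp] theorem split0_add (u v : σ →₀ ℕ) : split0 p (u + v) = split0 p u + split0 p v :=
  Finsupp.subtypeDomain_add

@[simp] theorem split1_add (u v : σ →₀ ℕ) : split1 p (u + v) = split1 p u + split1 p v :=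
  Finsupp.subtypeDomain_add

theorem split0_single_pos {s : σ} (h : p s) (m : ℕ) :
    split0 p (Finsupp.single s m) = Finsupp.single (⟨s, h⟩ : {s // p s}) m := by
  ext ⟨t, ht⟩
  by_cases hts : s = t
  · subst hts; simp [split0]
  · have h2 : (⟨s, h⟩ : {s // p s}) ≠ ⟨t, ht⟩ := by simpa [Subtype.ext_iff] using hts
    simp [split0, Finsupp.single_eq_of_ne' hts, Finsupp.single_eq_of_ne' h2]

theorem split0_single_neg {s : σ} (h : ¬ p s) (m : ℕ) :
    split0 p (Finsupp.single s m) = 0 := by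
  ext ⟨t, ht⟩
  have hts : s ≠ t := fun hc => h (hc ▸ ht)
  simp [split0, Finsupp.single_eq_of_ne' hts]

theorem split1_single_neg {s : σ} (h : ¬ p s) (m : ℕ) :
    split1 p (Finsupp.single s m) = Finsupp.single (⟨s, h⟩ : {s // ¬ p s}) m := by
  ext ⟨t, ht⟩
  by_cases hts : s = t
  · subst hts; simp [split1]
  · have h2 : (⟨s, h⟩ : {s // ¬ p s}) ≠ ⟨t, ht⟩ := by simpa [Subtype.ext_iff] using hts
    simp [split1, Finsupp.single_eq_of_ne' hts, Finsupp.single_eq_of_ne' h2]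

theorem split1_single_pos {s : σ} (h : p s) (m : ℕ) :
    split1 p (Finsupp.single s m) = 0 := by
  ext ⟨t, ht⟩
  have hts : s ≠ t := fun hc => ht (hc ▸ h)
  simp [split1, Finsupp.single_eq_of_ne' hts]

theorem weight_merge {M : Type*} [AddCommMonoid M] (w : σ → M) (α : {s // p s} →₀ ℕ)
    (d : {s // ¬ p s} →₀ ℕ) :
    Finsupp.weight w (merge p α d) =
      Finsupp.weight (fun s : {s // p s} => w s.1) α +
        Finsupp.weight (fun s : {s // ¬ p s} => w s.1) d := by
  have key : ∀ (q : σ → Prop) (β : {s // q s} →₀ ℕ),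
      Finsupp.weight w (Finsupp.embDomain (Function.Embedding.subtype q) β) =
        Finsupp.weight (fun s : {s // q s} => w s.1) β := by
    intro q β
    rw [Finsupp.weight_apply, Finsupp.sum_embDomain, Finsupp.weight_apply]
    rfl
  rw [merge, map_add, key, key]

theorem Phi_monomial {k : Type*} [CommRing k] (u : σ →₀ ℕ) (r : k) :
    Phi p k (monomial u r) = monomial (split0 p u) (monomial (split1 p u) r) := by
  induction u using Finsupp.induction with
  | zero =>
    have e0 : split0 p (0 : σ →₀ ℕ) = 0 := Finsupp.subtypeDomain_zero
    have e1 : split1 p (0 : σ →₀ ℕ) = 0 := Finsupp.subtypeDomain_zero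
    rw [e0, e1, monomial_zero', monomial_zero', monomial_zero', Phi_C]
  | single_add s m u hs hm ih =>
    rw [monomial_single_add, map_mul, map_pow, ih, split0_add, split1_add]
    by_cases h : p s
    · rw [Phi_X_pos p h, split0_single_pos p h, split1_single_pos p h, zero_add,
        X_pow_eq_monomial, monomial_mul, one_mul]
    · rw [Phi_X_neg p h, split1_single_neg p h, split0_single_neg p h, zero_add,
        ← map_pow, X_pow_eq_monomial, C_mul_monomial, monomial_mul, one_mul]

theorem coeff_coeff_Phi {k : Type*} [CommRing k] (f : MvPolynomial σ k)
    (α : {s // p s} →₀ ℕ) (d : {s // ¬ p s} →₀ ℕ) :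
    coeff d (coeff α (Phi p k f)) = coeff (merge p α d) f := by
  classical
  induction f using MvPolynomial.induction_on' with
  | monomial u r =>
    rw [Phi_monomial, coeff_monomial, coeff_monomial]
    by_cases h0 : split0 p u = α
    · rw [if_pos h0, coeff_monomial]
      by_cases h1 : split1 p u = d
      · rw [if_pos h1, if_pos]
        rw [eq_merge_iff]; exact ⟨h0, h1⟩
      · rw [if_neg h1, if_neg]
        rw [eq_merge_iff]; exact fun hc => h1 hc.2
    · rw [if_neg h0, coeff_zero, if_neg]
      rw [eq_merge_iff]; exact fun hc => h0 hc.1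
  | add f g hf hg =>
    rw [map_add, coeff_add, coeff_add, hf, hg, coeff_add]

theorem isWeightedHomogeneous_coeff_Phi {k : Type*} [CommRing k] {M : Type*} [AddCommGroup M]
    {w : σ → M} {m : M} {f : MvPolynomial σ k} (hf : IsWeightedHomogeneous w f m)
    (α : {s // p s} →₀ ℕ) :
    IsWeightedHomogeneous (fun t : {s // ¬ p s} => w t.1) (coeff α (Phi p k f))
      (m - Finsupp.weight (fun s : {s // p s} => w s.1) α) := by
  intro d hd
  rw [coeff_coeff_Phi] at hd
  have h1 := hf hd
  rw [weight_merge] at h1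
  rw [eq_sub_iff_add_eq, add_comm, h1]

section Derivations

variable {k : Type*} [CommRing k]

/-- Transport of a derivation along an algebra isomorphism. -/
noncomputable def transportDer {R S : Type*} [CommRing R] [CommRing S] [Algebra k R] [Algebra k S]
    (e : R ≃ₐ[k] S) (D : Derivation k R R) : Derivation k S S where
  toLinearMap := e.toLinearMap ∘ₗ D.toLinearMap ∘ₗ e.symm.toLinearMap
  map_one_eq_zero' := by
    simp only [LinearMap.coe_comp, Function.comp_apply, AlgEquiv.toLinearMap_apply, map_one,
      Derivation.coeFn_coe, Derivation.map_one_eq_zero, map_zero]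
  leibniz' a b := by
    simp only [LinearMap.coe_comp, Function.comp_apply, AlgEquiv.toLinearMap_apply, map_mul,
      Derivation.coeFn_coe, Derivation.leibniz, map_add, smul_eq_mul, map_mul,
      AlgEquiv.apply_symm_apply]

theorem transportDer_apply {R S : Type*} [CommRing R] [CommRing S] [Algebra k R] [Algebra k S]
    (e : R ≃ₐ[k] S) (D : Derivation k R R) (x : S) :
    transportDer e D x = e (D (e.symm x)) := rfl

variable {σ₀ : Type*} {A : Type*} [CommRing A] [Algebra k A]

/-- Extracting the coefficient of `X^γ` from `D (C ·)` yields a derivation of the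
coefficient ring. -/
noncomputable def coeffDer (D : Derivation k (MvPolynomial σ₀ A) (MvPolynomial σ₀ A))
    (γ : σ₀ →₀ ℕ) : Derivation k A A where
  toLinearMap := ((lcoeff A γ).restrictScalars k) ∘ₗ D.toLinearMap ∘ₗ
    ((Algebra.linearMap A (MvPolynomial σ₀ A)).restrictScalars k)
  map_one_eq_zero' := by
    simp only [LinearMap.coe_comp, Function.comp_apply, LinearMap.coe_restrictScalars,
      Algebra.linearMap_apply, map_one, Derivation.coeFn_coe, Derivation.map_one_eq_zero,
      map_zero]
  leibniz' a b := by
    simp only [LinearMap.coe_comp, Function.comp_apply, LinearMap.coe_restrictScalars,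
      Algebra.linearMap_apply, MvPolynomial.algebraMap_eq, map_mul, Derivation.coeFn_coe,
      Derivation.leibniz, smul_eq_mul, map_add, lcoeff_apply, coeff_add, coeff_C_mul]

theorem coeffDer_apply (D : Derivation k (MvPolynomial σ₀ A) (MvPolynomial σ₀ A))
    (γ : σ₀ →₀ ℕ) (q : A) : coeffDer D γ q = coeff γ (D (C q)) := rfl

theorem der_monomial_one (D : Derivation k (MvPolynomial σ₀ A) (MvPolynomial σ₀ A))
    (hX : ∀ s : σ₀, D (X s) = 0) (β : σ₀ →₀ ℕ) :
    D (monomial β (1 : A)) = 0 := by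
  induction β using Finsupp.induction with
  | zero => rw [monomial_zero', map_one, Derivation.map_one_eq_zero]
  | single_add s m β hs hm ih =>
    rw [monomial_single_add, Derivation.leibniz, ih, Derivation.leibniz_pow, hX, smul_zero,
      smul_zero, smul_zero, smul_zero, add_zero]

theorem der_eq_sum (D : Derivation k (MvPolynomial σ₀ A) (MvPolynomial σ₀ A))
    (hX : ∀ s : σ₀, D (X s) = 0) (g : MvPolynomial σ₀ A) :
    D g = ∑ β ∈ g.support, monomial β (1 : A) * D (C (coeff β g)) := by
  conv_lhs => rw [as_sum g]
  rw [map_sum]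
  refine Finset.sum_congr rfl fun β _ => ?_
  have h1 : monomial β (coeff β g) = C (coeff β g) * monomial β (1 : A) := by
    rw [C_mul_monomial, mul_one]
  rw [h1, Derivation.leibniz, der_monomial_one D hX, smul_zero, zero_add, smul_eq_mul]

theorem coeff_der (D : Derivation k (MvPolynomial σ₀ A) (MvPolynomial σ₀ A))
    (hX : ∀ s : σ₀, D (X s) = 0) (g : MvPolynomial σ₀ A) (γ : σ₀ →₀ ℕ) :
    coeff γ (D g) =
      ∑ β ∈ g.support, if β ≤ γ then coeffDer D (γ - β) (coeff β g) else 0 := by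
  rw [der_eq_sum D hX, coeff_sum]
  refine Finset.sum_congr rfl fun β _ => ?_
  rw [coeff_monomial_mul', coeffDer_apply]
  split_ifs with h
  · rw [one_mul]
  · rfl

end Derivations

/-- The predicate selecting the weight-`a 0` block of variables. -/
abbrev pz (n : ℕ) (c : Fin (n + 1) → ℕ) : BlockIdx n c → Prop := fun s => s.1 = 0


end ClaimIIe

open MvPolynomial ClaimIIe

/-- **Paper's Claim II.e**: the kernel of the Euler-sequence projection `pr` on `L_{-b}(V_d)`
consists only of the null derivation.  Under the nondegeneracy hypothesis II.c, for every
`b > 0`, every `k`-derivation of weight `-b` vanishing on `V_d` and killing all the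
weight-`a 0` variables `x_{0j}` is zero. -/
theorem claim_II_e (k : Type*) [CommRing k] [CharZero k]
    (n : ℕ) (c : Fin (n + 1) → ℕ) (hc : ∀ i, 1 ≤ c i)
    (a : Fin (n + 1) → ℕ) (ha : StrictMono a) (ha0 : 0 < a 0)
    (d : ℕ)
    (V : Submodule k (MvPolynomial (BlockIdx n c) k))
    (hV : ∀ f ∈ V, MvPolynomial.IsWeightedHomogeneous (blockWt a) f (d : ℤ))
    (hnd : ∀ (J : Ideal k) (b : ℕ), 0 < b →
      ∀ der : Derivation (k ⧸ J) (MvPolynomial {s : BlockIdx n c // s.1 ≠ 0} (k ⧸ J))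
          (MvPolynomial {s : BlockIdx n c // s.1 ≠ 0} (k ⧸ J)),
        DerivationHasWt (fun t : {s : BlockIdx n c // s.1 ≠ 0} => (a t.1.1 : ℤ)) (b : ℤ) der →
        (∀ f ∈ V, der (restrictBlocks n c J f) = 0) → der = 0) :
    ∀ b : ℕ, 0 < b →
      ∀ der : Derivation k (MvPolynomial (BlockIdx n c) k) (MvPolynomial (BlockIdx n c) k),
        DerivationHasWt (blockWt a) (b : ℤ) der →
        (∀ f ∈ V, der f = 0) →
        (∀ j : Fin (c 0), der (MvPolynomial.X (⟨0, j⟩ : BlockIdx n c)) = 0) →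
        der = 0 := by
  classical
  intro b hb der hder hVder hx0
  -- the transported derivation kills the weight-`a 0` variables
  have hX0 : ∀ s₀ : {s : BlockIdx n c // pz n c s},
      transportDer (Phi (pz n c) k) der (X s₀) = 0 := by
    intro s₀
    have h1 := Phi_X_pos (k := k) (p := pz n c) (s := (s₀ : BlockIdx n c)) s₀.2
    rw [Subtype.coe_eta] at h1
    rw [transportDer_apply, ← h1, AlgEquiv.symm_apply_apply]
    have hx : der (X (s₀ : BlockIdx n c)) = 0 := by
      obtain ⟨⟨i, j⟩, (hi : i = 0)⟩ := s₀
      subst hi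
      exact hx0 j
    rw [hx, map_zero]
  -- values of the coefficient derivations on variables
  have hTX : ∀ (γ : {s : BlockIdx n c // pz n c s} →₀ ℕ)
      (t : {s : BlockIdx n c // ¬ pz n c s}),
      coeffDer (transportDer (Phi (pz n c) k) der) γ (X t)
        = coeff γ (Phi (pz n c) k (der (X (t : BlockIdx n c)))) := by
    intro γ t
    rw [coeffDer_apply]
    have h1 : (C (X t) : MvPolynomial {s : BlockIdx n c // pz n c s}
          (MvPolynomial {s : BlockIdx n c // ¬ pz n c s} k))
        = Phi (pz n c) k (X (t : BlockIdx n c)) := by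
      obtain ⟨s, hs⟩ := t
      exact (Phi_X_neg (pz n c) hs).symm
    rw [h1, transportDer_apply, AlgEquiv.symm_apply_apply]
  -- injectivity of the coefficient reduction
  have hmkinj : Function.Injective (Ideal.Quotient.mk (⊥ : Ideal k)) := by
    rw [RingHom.injective_iff_ker_eq_bot]
    exact Ideal.mk_ker
  have hinj : Function.Injective
      (MvPolynomial.map (σ := {s : BlockIdx n c // s.1 ≠ 0}) (Ideal.Quotient.mk (⊥ : Ideal k))) :=
    MvPolynomial.map_injective _ hmkinj
  -- `restrictBlocks` is reduction of the constant term of `Phi`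
  have hres : ∀ f : MvPolynomial (BlockIdx n c) k,
      restrictBlocks n c ⊥ f
        = MvPolynomial.map (Ideal.Quotient.mk (⊥ : Ideal k))
            (coeff 0 (Phi (pz n c) k f)) := by
    intro f
    induction f using MvPolynomial.induction_on with
    | C r =>
      rw [Phi_C, coeff_zero_C, restrictBlocks]
      simp
    | add f g hf hg =>
      rw [map_add, map_add, coeff_add, map_add, hf, hg]
    | mul_X f s hf =>
      rw [map_mul (restrictBlocks n c ⊥) f (X s), map_mul (Phi (pz n c) k) f (X s)]
      by_cases hs : s.1 = 0
      · have h1 : Phi (pz n c) k (X s) = X (⟨s, hs⟩ : {s : BlockIdx n c // pz n c s}) :=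
          Phi_X_pos (pz n c) hs
        have h2 : restrictBlocks n c (⊥ : Ideal k) (X s) = 0 := by
          rw [restrictBlocks]
          simp [hs]
        rw [h1, coeff_mul_X', if_neg (by simp), map_zero, h2, mul_zero]
      · have h1 : Phi (pz n c) k (X s)
            = C (X (⟨s, hs⟩ : {s : BlockIdx n c // ¬ pz n c s})) := Phi_X_neg (pz n c) hs
        have h2 : restrictBlocks n c (⊥ : Ideal k) (X s)
            = X (⟨s, hs⟩ : {s : BlockIdx n c // s.1 ≠ 0}) := by
          rw [restrictBlocks]
          simp [hs]
        rw [hf, h2, h1, mul_comm ((Phi (pz n c) k) f)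
          (C (X (⟨s, hs⟩ : {s : BlockIdx n c // ¬ pz n c s}))), coeff_C_mul, map_mul, map_X]
        ring
  -- the reduced derivation commutes with coefficient reduction
  have hcomm : ∀ (γ : {s : BlockIdx n c // pz n c s} →₀ ℕ)
      (q : MvPolynomial {s : BlockIdx n c // ¬ pz n c s} k),
      (mkDerivation (k ⧸ (⊥ : Ideal k)) fun t : {s : BlockIdx n c // s.1 ≠ 0} =>
          MvPolynomial.map (Ideal.Quotient.mk (⊥ : Ideal k))
            (coeffDer (transportDer (Phi (pz n c) k) der) γ (X t)))
        (MvPolynomial.map (Ideal.Quotient.mk (⊥ : Ideal k)) q)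
      = MvPolynomial.map (Ideal.Quotient.mk (⊥ : Ideal k))
          (coeffDer (transportDer (Phi (pz n c) k) der) γ q) := by
    intro γ q
    induction q using MvPolynomial.induction_on with
    | C r =>
      rw [map_C, derivation_C, derivation_C, map_zero]
    | add f g hf hg =>
      simp only [map_add, hf, hg]
    | mul_X f t hf =>
      rw [map_mul (MvPolynomial.map (Ideal.Quotient.mk (⊥ : Ideal k))) f (X t), map_X,
        Derivation.leibniz, mkDerivation_X, hf, Derivation.leibniz, smul_eq_mul, smul_eq_mul,
        smul_eq_mul, smul_eq_mul, map_add, map_mul, map_mul, map_X]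
  -- the inductive step
  have hstep : ∀ γ : {s : BlockIdx n c // pz n c s} →₀ ℕ,
      (∀ β : {s : BlockIdx n c // pz n c s} →₀ ℕ, β ≠ 0 → β ≤ γ →
        coeffDer (transportDer (Phi (pz n c) k) der) (γ - β) = 0) →
      coeffDer (transportDer (Phi (pz n c) k) der) γ = 0 := by
    intro γ hsmall
    have hwγ : Finsupp.weight
          (fun s : {s : BlockIdx n c // pz n c s} => blockWt a s.1) γ
        = (a 0 : ℤ) * ((γ.sum fun _ x => x : ℕ) : ℤ) := by
      rw [Finsupp.weight_apply, Finsupp.sum, Finsupp.sum, Nat.cast_sum, Finset.mul_sum]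
      refine Finset.sum_congr rfl fun s _ => ?_
      simp only [blockWt]
      rw [s.2, nsmul_eq_mul]
      ring
    have hb' : 0 < b + a 0 * (γ.sum fun _ x => x) :=
      Nat.lt_of_lt_of_le hb (Nat.le_add_right _ _)
    have hwt : DerivationHasWt (fun t : {s : BlockIdx n c // s.1 ≠ 0} => (a t.1.1 : ℤ))
        ((b + a 0 * (γ.sum fun _ x => x) : ℕ) : ℤ)
        (mkDerivation (k ⧸ (⊥ : Ideal k)) fun t : {s : BlockIdx n c // s.1 ≠ 0} =>
          MvPolynomial.map (Ideal.Quotient.mk (⊥ : Ideal k))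
            (coeffDer (transportDer (Phi (pz n c) k) der) γ (X t))) := by
      intro t
      rw [mkDerivation_X, hTX γ t]
      have h1 := isWeightedHomogeneous_coeff_Phi (pz n c) (hder (t : BlockIdx n c)) γ
      have h2 : IsWeightedHomogeneous
          (fun t' : {s : BlockIdx n c // ¬ pz n c s} => blockWt a t'.1)
          (MvPolynomial.map (Ideal.Quotient.mk (⊥ : Ideal k))
            (coeff γ (Phi (pz n c) k (der (X (t : BlockIdx n c))))))
          ((blockWt a (t : BlockIdx n c) - b) - Finsupp.weight
            (fun s : {s : BlockIdx n c // pz n c s} => blockWt a s.1) γ) := by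
        intro dd hdd
        apply h1
        rw [coeff_map] at hdd
        intro h0
        rw [h0, map_zero] at hdd
        exact hdd rfl
      have h3 : (a t.1.1 : ℤ) - ((b + a 0 * (γ.sum fun _ x => x) : ℕ) : ℤ)
          = (blockWt a (t : BlockIdx n c) - b) - Finsupp.weight
            (fun s : {s : BlockIdx n c // pz n c s} => blockWt a s.1) γ := by
        rw [hwγ]
        simp only [blockWt]
        push_cast
        ring
      rw [h3]
      exact h2
    have hvan : ∀ f ∈ V,
        (mkDerivation (k ⧸ (⊥ : Ideal k)) fun t : {s : BlockIdx n c // s.1 ≠ 0} =>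
          MvPolynomial.map (Ideal.Quotient.mk (⊥ : Ideal k))
            (coeffDer (transportDer (Phi (pz n c) k) der) γ (X t)))
        (restrictBlocks n c ⊥ f) = 0 := by
      intro f hf
      rw [hres f, hcomm γ]
      have h0 : transportDer (Phi (pz n c) k) der (Phi (pz n c) k f) = 0 := by
        rw [transportDer_apply, AlgEquiv.symm_apply_apply, hVder f hf, map_zero]
      have h1 := coeff_der (transportDer (Phi (pz n c) k) der) hX0 (Phi (pz n c) k f) γ
      rw [h0, coeff_zero] at h1
      have h3 : ∑ β ∈ (Phi (pz n c) k f).support,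
          (if β ≤ γ then coeffDer (transportDer (Phi (pz n c) k) der) (γ - β)
            (coeff β (Phi (pz n c) k f)) else 0)
          = coeffDer (transportDer (Phi (pz n c) k) der) γ (coeff 0 (Phi (pz n c) k f)) := by
        rw [Finset.sum_eq_single (0 : {s : BlockIdx n c // pz n c s} →₀ ℕ)]
        · rw [if_pos (zero_le : 0 ≤ γ), tsub_zero]
        · intro β _ hβ0
          by_cases hβγ : β ≤ γ
          · rw [if_pos hβγ, hsmall β hβ0 hβγ]
            simp
          · rw [if_neg hβγ]
        · intro h0'
          rw [if_pos (zero_le : 0 ≤ γ), tsub_zero, notMem_support_iff.mp h0', map_zero]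
      have h2 : coeffDer (transportDer (Phi (pz n c) k) der) γ
          (coeff 0 (Phi (pz n c) k f)) = 0 := by
        rw [← h3]
        exact h1.symm
      rw [h2, map_zero]
    have h4 := hnd ⊥ (b + a 0 * (γ.sum fun _ x => x)) hb' _ hwt hvan
    apply derivation_ext
    intro t
    have h5 : MvPolynomial.map (Ideal.Quotient.mk (⊥ : Ideal k))
        (coeffDer (transportDer (Phi (pz n c) k) der) γ (X t)) = 0 := by
      rw [← mkDerivation_X (k ⧸ (⊥ : Ideal k))
        (fun t : {s : BlockIdx n c // s.1 ≠ 0} =>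
          MvPolynomial.map (Ideal.Quotient.mk (⊥ : Ideal k))
            (coeffDer (transportDer (Phi (pz n c) k) der) γ (X t))) t, h4]
      simp
    have h6 := hinj (h5.trans (map_zero _).symm)
    rw [h6]
    simp
  -- strong induction on the total degree of γ
  have hle_sum : ∀ (δ : {s : BlockIdx n c // pz n c s} →₀ ℕ) (s), δ s ≤ δ.sum fun _ x => x := by
    intro δ s
    by_cases hs : δ s = 0
    · simp [hs]
    · rw [Finsupp.sum]
      exact Finset.single_le_sum (fun i _ => Nat.zero_le _) (Finsupp.mem_support_iff.mpr hs)
  have key : ∀ m : ℕ, ∀ γ : {s : BlockIdx n c // pz n c s} →₀ ℕ,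
      (γ.sum fun _ x => x) ≤ m →
      coeffDer (transportDer (Phi (pz n c) k) der) γ = 0 := by
    intro m
    induction m with
    | zero =>
      intro γ hγ
      apply hstep
      intro β hβ0 hβγ
      exfalso
      obtain ⟨s, hs⟩ := Finsupp.ne_iff.mp hβ0
      have h1 : β s ≤ γ s := (Finsupp.le_def.mp hβγ) s
      have h2 := hle_sum γ s
      simp only [Finsupp.coe_zero, Pi.zero_apply] at hs
      omega
    | succ m ih =>
      intro γ hγ
      apply hstep
      intro β hβ0 hβγ
      apply ih
      have h1 : (γ - β) + β = γ := tsub_add_cancel_of_le hβγ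
      have h2 : ((γ - β).sum fun _ x => x) + (β.sum fun _ x => x) = γ.sum fun _ x => x := by
        rw [← Finsupp.sum_add_index' (fun _ => rfl) (fun _ _ _ => rfl), h1]
      obtain ⟨s, hs⟩ := Finsupp.ne_iff.mp hβ0
      simp only [Finsupp.coe_zero, Pi.zero_apply] at hs
      have h3 := hle_sum β s
      omega
  have keyAll : ∀ γ : {s : BlockIdx n c // pz n c s} →₀ ℕ,
      coeffDer (transportDer (Phi (pz n c) k) der) γ = 0 :=
    fun γ => key _ γ le_rfl
  -- conclude
  apply derivation_ext
  intro s
  by_cases hs : s.1 = 0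
  · obtain ⟨i, j⟩ := s
    have hi : i = 0 := hs
    subst hi
    rw [hx0 j]
    simp
  · have h1 : Phi (pz n c) k (X s)
        = C (X (⟨s, hs⟩ : {s : BlockIdx n c // ¬ pz n c s})) := Phi_X_neg (pz n c) hs
    have h2 : transportDer (Phi (pz n c) k) der
        (C (X (⟨s, hs⟩ : {s : BlockIdx n c // ¬ pz n c s}))) = 0 := by
      apply MvPolynomial.ext
      intro γ
      rw [coeff_zero]
      rw [← coeffDer_apply (transportDer (Phi (pz n c) k) der) γ
        (X (⟨s, hs⟩ : {s : BlockIdx n c // ¬ pz n c s})), keyAll γ]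
      simp
    have h3 : Phi (pz n c) k (der (X s)) = 0 := by
      calc Phi (pz n c) k (der (X s))
          = transportDer (Phi (pz n c) k) der (Phi (pz n c) k (X s)) := by
            rw [transportDer_apply, AlgEquiv.symm_apply_apply]
        _ = 0 := by rw [h1, h2]
    have h4 := (Phi (pz n c) k).injective (h3.trans (map_zero (Phi (pz n c) k)).symm)
    rw [h4]
    simp
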